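/- Any non-signaling n-partite box P satisfying P(⊕_{i=1}^n A_i = ∧_{i=1}^n X_i | X = x) = 1 for all inputs x ∈ {0,1}^n must have all single-party output marginals uniform: Prob[A_i = 0 | X = x] = 1/2 for all i and all x. Consequently, P equals the n-PR box. -/

import Mathlib

open Finset

noncomputable section

/-- An `n`-partite box: conditional distribution `P x a` of outputs `a` given inputs `x`,
with binary inputs/outputs modeled as `ZMod 2`. -/
abbrev Box (n : ℕ) := (Fin n → ZMod 2) → (Fin n → ZMod 2) → ℝ

/-- Non-signaling: for every subset `S` of parties, the marginal of the outputs in `S`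
depends only on the inputs in `S`. -/
def IsNonSignaling {n : ℕ} (P : Box n) : Prop :=
  ∀ (S : Finset (Fin n)) (x x' : Fin n → ZMod 2), (∀ i ∈ S, x i = x' i) →
    ∀ aS : Fin n → ZMod 2,
      ∑ a ∈ Finset.univ.filter (fun a : Fin n → ZMod 2 => ∀ i ∈ S, a i = aS i), P x a =
      ∑ a ∈ Finset.univ.filter (fun a : Fin n → ZMod 2 => ∀ i ∈ S, a i = aS i), P x' a

/-- A non-signaling box: nonnegative, normalized, non-signaling. -/
def IsNSBox {n : ℕ} (P : Box n) : Prop :=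
  (∀ x a, 0 ≤ P x a) ∧ (∀ x, ∑ a, P x a = 1) ∧ IsNonSignaling P

/-- The full-correlation box associated to the Boolean function `f`. -/
def FCB (n : ℕ) (f : (Fin n → ZMod 2) → ZMod 2) : Box n :=
  fun x a => if (∑ i, a i) = f x then ((2:ℝ)^(n-1))⁻¹ else 0

/-- The `n`-partite Popescu–Rohrlich box. -/
def nPR (n : ℕ) : Box n := FCB n (fun x => ∏ i, x i)

/-- The local box with uniformly correlated outputs of even parity. -/
def Pc (n : ℕ) : Box n := FCB n (fun _ => 0)

/-- Extremality in the non-signaling polytope. -/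
def IsExtremalNS {n : ℕ} (P : Box n) : Prop :=
  IsNSBox P ∧ ∀ (ε : ℝ) (P1 P2 : Box n), 0 < ε → ε < 1 → IsNSBox P1 → IsNSBox P2 →
    (∀ x a, P x a = ε * P1 x a + (1 - ε) * P2 x a) → P1 = P ∧ P2 = P

/-- Locality: convex combination of products of single-party conditional distributions. -/
def IsLocal {n : ℕ} (P : Box n) : Prop :=
  ∃ (m : ℕ) (q : Fin m → ℝ) (s : Fin m → Fin n → ZMod 2 → ZMod 2 → ℝ),
    (∀ r, 0 ≤ q r) ∧ (∑ r, q r = 1) ∧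
    (∀ r i xi ai, 0 ≤ s r i xi ai) ∧ (∀ r i xi, ∑ ai : ZMod 2, s r i xi ai = 1) ∧
    ∀ x a, P x a = ∑ r, q r * ∏ i, s r i (x i) (a i)

/-- `f` is affine: a constant XORed with a subset of the input bits. -/
def IsAffine {n : ℕ} (f : (Fin n → ZMod 2) → ZMod 2) : Prop :=
  ∃ (c : ZMod 2) (S : Finset (Fin n)), ∀ x, f x = c + ∑ i ∈ S, x i

/-- L¹ distance between boxes. -/
def L1dist {n : ℕ} (P Q : Box n) : ℝ := ∑ x, ∑ a, |P x a - Q x a|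

namespace PRaux

/-- sign of a bit -/
def sgn (b : ZMod 2) : ℝ := if b = 0 then 1 else -1

lemma sgn_zero : sgn 0 = 1 := by simp [sgn]

lemma sgn_one : sgn 1 = -1 := by norm_num [sgn]

lemma sgn_add (b c : ZMod 2) : sgn (b + c) = sgn b * sgn c := by
  rcases (by decide : ∀ b : ZMod 2, b = 0 ∨ b = 1) b with rfl | rfl <;>
    rcases (by decide : ∀ b : ZMod 2, b = 0 ∨ b = 1) c with rfl | rfl <;>
    simp [sgn, show (1+1:ZMod 2) = 0 by decide, show (1:ZMod 2) ≠ 0 by decide]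

lemma sgn_sum {ι : Type*} (U : Finset ι) (c : ι → ZMod 2) :
    sgn (∑ i ∈ U, c i) = ∏ i ∈ U, sgn (c i) := by
  induction U using Finset.cons_induction with
  | empty => simp [sgn]
  | cons j s hj ih => rw [Finset.sum_cons, Finset.prod_cons, sgn_add, ih]

lemma zmod2_shift {s t p : ZMod 2} (h : s + t = p) : s = p + t := by
  revert h; revert s t p; decide

lemma zmod2_ne_one {b : ZMod 2} (h : b ≠ 1) : b = 0 := by
  revert h; revert b; decide

variable {n : ℕ} (P : Box n)

/-- the correlation/bias of the parity over a subset of parties -/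
def bias (U : Finset (Fin n)) (x : Fin n → ZMod 2) : ℝ :=
  ∑ a, P x a * sgn (∑ i ∈ U, a i)

lemma bias_empty (hP : ∀ x, ∑ a, P x a = 1) (x : Fin n → ZMod 2) :
    bias P ∅ x = 1 := by
  simp [bias, sgn_zero, hP x]

lemma bias_decomp (U : Finset (Fin n)) (y : Fin n → ZMod 2) :
    bias P U y = ∑ b ∈ Finset.univ.filter (fun b : Fin n → ZMod 2 => ∀ i ∉ U, b i = 0),
      sgn (∑ i ∈ U, b i) *
        ∑ a ∈ Finset.univ.filter (fun a : Fin n → ZMod 2 => ∀ i ∈ U, a i = b i), P y a := by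
  classical
  have key := Finset.sum_fiberwise (Finset.univ : Finset (Fin n → ZMod 2))
      (fun a : Fin n → ZMod 2 => fun i => if i ∈ U then a i else 0)
      (fun a => P y a * sgn (∑ i ∈ U, a i))
  rw [bias, ← key]
  rw [← Finset.sum_filter_add_sum_filter_not Finset.univ
      (fun b : Fin n → ZMod 2 => ∀ i ∉ U, b i = 0)]
  have h2 : ∑ b ∈ Finset.univ.filter (fun b : Fin n → ZMod 2 => ¬ ∀ i ∉ U, b i = 0),
      ∑ a ∈ Finset.univ.filter
        (fun a : Fin n → ZMod 2 => (fun i => if i ∈ U then a i else 0) = b),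
        P y a * sgn (∑ i ∈ U, a i) = 0 := by
    apply Finset.sum_eq_zero
    intro b hb
    apply Finset.sum_eq_zero
    intro a ha
    exfalso
    simp only [Finset.mem_filter, Finset.mem_univ, true_and] at ha hb
    apply hb
    intro i hi
    rw [← ha]
    simp [hi]
  rw [h2, add_zero]
  apply Finset.sum_congr rfl
  intro b hb
  simp only [Finset.mem_filter, Finset.mem_univ, true_and] at hb
  have hset : Finset.univ.filter
      (fun a : Fin n → ZMod 2 => (fun i => if i ∈ U then a i else 0) = b) =
      Finset.univ.filter (fun a : Fin n → ZMod 2 => ∀ i ∈ U, a i = b i) := by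
    apply Finset.filter_congr
    intro a _
    constructor
    · intro h i hi
      rw [← congrFun h i]; simp [hi]
    · intro h
      funext i
      by_cases hi : i ∈ U
      · simp [hi, h i hi]
      · simp [hi, hb i hi]
  rw [hset, Finset.mul_sum]
  apply Finset.sum_congr rfl
  intro a ha
  simp only [Finset.mem_filter, Finset.mem_univ, true_and] at ha
  rw [mul_comm]
  congr 2
  exact Finset.sum_congr rfl fun i hi => ha i hi

lemma bias_congr (hNS : IsNonSignaling P) (U : Finset (Fin n)) (x x' : Fin n → ZMod 2)
    (h : ∀ i ∈ U, x i = x' i) : bias P U x = bias P U x' := by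
  rw [bias_decomp, bias_decomp]
  apply Finset.sum_congr rfl
  intro b _
  rw [hNS U x x' h b]

lemma support_lemma (hP : IsNSBox P)
    (hperf : ∀ x, ∑ a ∈ Finset.univ.filter
        (fun a : Fin n → ZMod 2 => (∑ i, a i) = ∏ i, x i), P x a = 1)
    (x : Fin n → ZMod 2) (a : Fin n → ZMod 2) (h : (∑ i, a i) ≠ ∏ i, x i) :
    P x a = 0 := by
  classical
  have hsplit := Finset.sum_filter_add_sum_filter_not Finset.univ
      (fun a : Fin n → ZMod 2 => (∑ i, a i) = ∏ i, x i) (P x)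
  have h0 : ∑ b ∈ Finset.univ.filter
      (fun b : Fin n → ZMod 2 => ¬ (∑ i, b i) = ∏ i, x i), P x b = 0 := by
    have := hperf x
    have := hP.2.1 x
    linarith
  have := (Finset.sum_eq_zero_iff_of_nonneg (fun b _ => hP.1 x b)).1 h0 a
  exact this (by simp [h])

lemma bias_compl (hP : IsNSBox P)
    (hperf : ∀ x, ∑ a ∈ Finset.univ.filter
        (fun a : Fin n → ZMod 2 => (∑ i, a i) = ∏ i, x i), P x a = 1)
    (U : Finset (Fin n)) (x : Fin n → ZMod 2) :
    bias P U x = sgn (∏ i, x i) * bias P Uᶜ x := by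
  rw [bias, bias, Finset.mul_sum]
  apply Finset.sum_congr rfl
  intro a _
  by_cases hs : (∑ i, a i) = ∏ i, x i
  · have hsum : (∑ i ∈ U, a i) + ∑ i ∈ Uᶜ, a i = ∏ i, x i := by
      rw [Finset.sum_add_sum_compl, hs]
    have : (∑ i ∈ U, a i) = (∏ i, x i) + ∑ i ∈ Uᶜ, a i := zmod2_shift hsum
    rw [this, sgn_add]
    ring
  · rw [support_lemma P hP hperf x a hs]
    ring

lemma bias_univ (hP : IsNSBox P)
    (hperf : ∀ x, ∑ a ∈ Finset.univ.filter
        (fun a : Fin n → ZMod 2 => (∑ i, a i) = ∏ i, x i), P x a = 1)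
    (x : Fin n → ZMod 2) : bias P Finset.univ x = sgn (∏ i, x i) := by
  rw [bias_compl P hP hperf, Finset.compl_univ, bias_empty P hP.2.1, mul_one]

lemma bias_ones (hP : IsNSBox P)
    (hperf : ∀ x, ∑ a ∈ Finset.univ.filter
        (fun a : Fin n → ZMod 2 => (∑ i, a i) = ∏ i, x i), P x a = 1)
    (U : Finset (Fin n)) (hU : U.Nonempty) (hU' : U ≠ Finset.univ) :
    bias P U (fun _ => 1) = 0 := by
  classical
  obtain ⟨j, hj⟩ := hU
  obtain ⟨k, hk⟩ : ∃ k, k ∉ U := by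
    by_contra hc
    push_neg at hc
    exact hU' (Finset.eq_univ_iff_forall.2 hc)
  set x1 : Fin n → ZMod 2 := fun _ => 1 with hx1
  set x2 : Fin n → ZMod 2 := fun i => if i = k then 0 else 1 with hx2
  set x3 : Fin n → ZMod 2 := fun i => if i = j then 0 else 1 with hx3
  set x4 : Fin n → ZMod 2 := fun i => if i = j ∨ i = k then 0 else 1 with hx4
  have hjk : j ≠ k := fun h => hk (h ▸ hj)
  have hp1 : (∏ i, x1 i) = 1 := by simp [hx1]
  have hp2 : (∏ i, x2 i) = 0 := Finset.prod_eq_zero (Finset.mem_univ k) (by simp [hx2])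
  have hp3 : (∏ i, x3 i) = 0 := Finset.prod_eq_zero (Finset.mem_univ j) (by simp [hx3])
  have hp4 : (∏ i, x4 i) = 0 := Finset.prod_eq_zero (Finset.mem_univ j) (by simp [hx4])
  have hNS := hP.2.2
  have e1 : bias P U x1 = - bias P Uᶜ x1 := by
    rw [bias_compl P hP hperf, hp1, sgn_one]; ring
  have e2a : bias P U x2 = bias P U x1 := by
    apply bias_congr P hNS
    intro i hi
    have : i ≠ k := fun h => hk (h ▸ hi)
    simp [hx1, hx2, this]
  have e2b : bias P U x2 = bias P Uᶜ x2 := by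
    rw [bias_compl P hP hperf, hp2, sgn_zero, one_mul]
  have e3a : bias P Uᶜ x3 = bias P Uᶜ x1 := by
    apply bias_congr P hNS
    intro i hi
    have : i ≠ j := fun h => (Finset.mem_compl.1 hi) (h ▸ hj)
    simp [hx1, hx3, this]
  have e3b : bias P U x3 = bias P Uᶜ x3 := by
    rw [bias_compl P hP hperf, hp3, sgn_zero, one_mul]
  have e4a : bias P U x4 = bias P U x3 := by
    apply bias_congr P hNS
    intro i hi
    have : i ≠ k := fun h => hk (h ▸ hi)
    simp [hx3, hx4, this]
  have e4b : bias P Uᶜ x4 = bias P Uᶜ x2 := by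
    apply bias_congr P hNS
    intro i hi
    have : i ≠ j := fun h => (Finset.mem_compl.1 hi) (h ▸ hj)
    simp [hx2, hx4, this]
  have e4c : bias P U x4 = bias P Uᶜ x4 := by
    rw [bias_compl P hP hperf, hp4, sgn_zero, one_mul]
  linarith

lemma bias_proper (hP : IsNSBox P)
    (hperf : ∀ x, ∑ a ∈ Finset.univ.filter
        (fun a : Fin n → ZMod 2 => (∑ i, a i) = ∏ i, x i), P x a = 1)
    (U : Finset (Fin n)) (hU : U.Nonempty) (hU' : U ≠ Finset.univ)
    (x : Fin n → ZMod 2) : bias P U x = 0 := by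
  classical
  have hNS := hP.2.2
  set y : Fin n → ZMod 2 := fun i => if i ∈ U then x i else 1 with hy
  have h1 : bias P U x = bias P U y := by
    apply bias_congr P hNS
    intro i hi
    simp [hy, hi]
  rw [h1]
  by_cases hall : ∀ i ∈ U, x i = 1
  · have : y = fun _ => 1 := by
      funext i
      by_cases hi : i ∈ U <;> simp [hy, hi]
      exact hall i hi
    rw [this]
    exact bias_ones P hP hperf U ⟨hU.choose, hU.choose_spec⟩ hU'
  · push_neg at hall
    obtain ⟨j, hj, hxj⟩ := hall
    have hxj0 : x j = 0 := zmod2_ne_one hxj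
    have hpy : (∏ i, y i) = 0 :=
      Finset.prod_eq_zero (Finset.mem_univ j) (by simp [hy, hj, hxj0])
    rw [bias_compl P hP hperf, hpy, sgn_zero, one_mul]
    have h2 : bias P Uᶜ y = bias P Uᶜ (fun _ => 1) := by
      apply bias_congr P hNS
      intro i hi
      simp [hy, Finset.mem_compl.1 hi]
    rw [h2]
    apply bias_ones P hP hperf Uᶜ
    · rw [Finset.nonempty_iff_ne_empty]
      intro h
      exact hU' (by rwa [Finset.compl_eq_empty_iff] at h)
    · intro h
      rw [Finset.compl_eq_univ_iff] at h
      exact hU.ne_empty h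

lemma zmod2_add_self (c : ZMod 2) : c + c = 0 := by revert c; decide

lemma zmod2_add_ne {u v : ZMod 2} (h : u ≠ v) : u + v = 1 := by
  revert h; revert u v; decide

lemma inversion (x a : Fin n → ZMod 2) :
    ∑ U : Finset (Fin n), sgn (∑ i ∈ U, a i) * bias P U x = (2:ℝ)^n * P x a := by
  classical
  have step1 : ∀ U : Finset (Fin n), sgn (∑ i ∈ U, a i) * bias P U x
      = ∑ b, P x b * ∏ i ∈ U, sgn (a i + b i) := by
    intro U
    rw [bias, Finset.mul_sum]
    apply Finset.sum_congr rfl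
    intro b _
    have h : ∏ i ∈ U, sgn (a i + b i) = sgn (∑ i ∈ U, a i) * sgn (∑ i ∈ U, b i) := by
      rw [sgn_sum, sgn_sum, ← Finset.prod_mul_distrib]
      exact Finset.prod_congr rfl fun i _ => sgn_add _ _
    rw [h]
    ring
  rw [Finset.sum_congr rfl fun U _ => step1 U, Finset.sum_comm]
  have key : ∀ b : Fin n → ZMod 2,
      ∑ U : Finset (Fin n), ∏ i ∈ U, sgn (a i + b i) = if b = a then (2:ℝ)^n else 0 := by
    intro b
    have hpa := Finset.prod_add (fun i => sgn (a i + b i)) (fun _ => (1:ℝ)) Finset.univ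
    simp only [Finset.prod_const_one, mul_one] at hpa
    rw [← Finset.powerset_univ, ← hpa]
    by_cases hb : b = a
    · rw [if_pos hb, hb]
      have : ∀ i, sgn (a i + a i) + 1 = 2 := by
        intro i
        rw [zmod2_add_self, sgn_zero]; norm_num
      rw [Finset.prod_congr rfl fun i _ => this i, Finset.prod_const]
      simp
    · rw [if_neg hb]
      obtain ⟨i, hi⟩ := Function.ne_iff.1 hb
      apply Finset.prod_eq_zero (Finset.mem_univ i)
      have h1 : a i + b i = 1 := zmod2_add_ne (Ne.symm hi)
      rw [h1, sgn_one]
      norm_num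
  rw [Finset.sum_congr rfl fun b _ => by rw [← Finset.mul_sum, key b]]
  simp only [mul_ite, mul_zero]
  rw [Finset.sum_ite_eq' Finset.univ a]
  simp [mul_comm]

lemma sgn_mul_self (b : ZMod 2) : sgn b * sgn b = 1 := by
  rw [← sgn_add, zmod2_add_self, sgn_zero]

lemma value (hn : 2 ≤ n) (hP : IsNSBox P)
    (hperf : ∀ x, ∑ a ∈ Finset.univ.filter
        (fun a : Fin n → ZMod 2 => (∑ i, a i) = ∏ i, x i), P x a = 1)
    (x a : Fin n → ZMod 2) :
    P x a = if (∑ i, a i) = ∏ i, x i then ((2:ℝ)^(n-1))⁻¹ else 0 := by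
  classical
  haveI : Nonempty (Fin n) := ⟨⟨0, by omega⟩⟩
  have hne : (∅ : Finset (Fin n)) ≠ Finset.univ := by
    intro h
    have := congrArg Finset.card h
    simp at this
    omega
  have hinv := inversion P x a
  have hsum : ∑ U : Finset (Fin n), sgn (∑ i ∈ U, a i) * bias P U x
      = sgn (∑ i ∈ (∅ : Finset (Fin n)), a i) * bias P ∅ x +
        sgn (∑ i, a i) * bias P Finset.univ x := by
    apply Finset.sum_eq_add_of_mem ∅ Finset.univ (Finset.mem_univ _) (Finset.mem_univ _) hne
    intro U _ hU
    rw [bias_proper P hP hperf U (Finset.nonempty_iff_ne_empty.2 hU.1) hU.2, mul_zero]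
  rw [hsum] at hinv
  rw [Finset.sum_empty, sgn_zero, bias_empty P hP.2.1, bias_univ P hP hperf,
    one_mul] at hinv
  have h2 : (0:ℝ) < 2^(n-1) := by positivity
  have hpow : (2:ℝ)^n = 2 * 2^(n-1) := by
    rw [← pow_succ']
    congr 1
    omega
  by_cases h : (∑ i, a i) = ∏ i, x i
  · rw [if_pos h]
    rw [h, sgn_mul_self] at hinv
    rw [hpow] at hinv
    field_simp
    linarith
  · rw [if_neg h]
    have : sgn (∑ i, a i) * sgn (∏ i, x i) = -1 := by
      rw [← sgn_add, zmod2_add_ne h, sgn_one]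
    rw [this] at hinv
    have h3 : (0:ℝ) < 2^n := by positivity
    nlinarith

end PRaux

/-- a non-signaling box perfectly satisfying the n-PR correlation has
uniform single-party marginals, and equals the n-PR box. -/
theorem perfect_PR_correlation_unique (n : ℕ) (hn : 2 ≤ n) (P : Box n)
    (hP : IsNSBox P)
    (hperf : ∀ x, ∑ a ∈ Finset.univ.filter
        (fun a : Fin n → ZMod 2 => (∑ i, a i) = ∏ i, x i), P x a = 1) :
    (∀ (i : Fin n) (x : Fin n → ZMod 2),
      ∑ a ∈ Finset.univ.filter (fun a : Fin n → ZMod 2 => a i = 0), P x a = 1/2) ∧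
    P = nPR n := by
  classical
  constructor
  · intro i x
    have hsing : ({i} : Finset (Fin n)) ≠ Finset.univ := by
      intro h
      have := congrArg Finset.card h
      simp at this
      omega
    have hb := PRaux.bias_proper P hP hperf {i} (Finset.singleton_nonempty i) hsing x
    have hbias : PRaux.bias P {i} x
        = (∑ a ∈ Finset.univ.filter (fun a : Fin n → ZMod 2 => a i = 0), P x a)
          - ∑ a ∈ Finset.univ.filter (fun a : Fin n → ZMod 2 => ¬ a i = 0), P x a := by
      rw [PRaux.bias, ← Finset.sum_filter_add_sum_filter_not Finset.univ
        (fun a : Fin n → ZMod 2 => a i = 0)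
        (fun a => P x a * PRaux.sgn (∑ j ∈ ({i} : Finset (Fin n)), a j))]
      rw [sub_eq_add_neg, ← Finset.sum_neg_distrib]
      congr 1
      · apply Finset.sum_congr rfl
        intro a ha
        simp only [Finset.mem_filter] at ha
        rw [Finset.sum_singleton, ha.2, PRaux.sgn_zero, mul_one]
      · apply Finset.sum_congr rfl
        intro a ha
        simp only [Finset.mem_filter] at ha
        rw [Finset.sum_singleton]
        simp [PRaux.sgn, ha.2]
    have hnorm : (∑ a ∈ Finset.univ.filter (fun a : Fin n → ZMod 2 => a i = 0), P x a)
        + ∑ a ∈ Finset.univ.filter (fun a : Fin n → ZMod 2 => ¬ a i = 0), P x a = 1 := by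
      rw [Finset.sum_filter_add_sum_filter_not]
      exact hP.2.1 x
    rw [hbias] at hb
    linarith
  · funext x a
    have := PRaux.value P hn hP hperf x a
    simpa only [nPR, FCB] using this
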